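/- arXiv:1808.02689 — 3 statements merged into one kernel-verified Lean document; each statement's English description precedes it below -/
import Mathlib

section
/- Let K = (1/T)((ln λ) I + ∑_{k=1}^{m-1} ((-1)^{k+1}/k)(ε')^k N^k) ∈ ℝ^{m×m} with λ > 0, T > 0, 0 < ε' ≤ 1/2, and N the nilpotent shift matrix. Then for all w ∈ ℂ^m: (1/2) w^*(K^* + K) w ≤ ((ln λ)/T + (2ε')/T) ‖w‖². -/
open Matrix Finset

def shiftMatrix (m : ℕ) : Matrix (Fin m) (Fin m) ℝ :=
  Matrix.of fun i j => if (i : ℕ) + 1 = (j : ℕ) then 1 else 0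

namespace JordanAux

lemma shift_pow_apply (m k : ℕ) (i j : Fin m) :
    ((shiftMatrix m) ^ k) i j = if (i : ℕ) + k = (j : ℕ) then 1 else 0 := by
  induction k generalizing j with
  | zero => simp [Matrix.one_apply, Fin.ext_iff]
  | succ k ih =>
    rw [pow_succ, Matrix.mul_apply]
    simp only [ih]
    simp only [shiftMatrix, Matrix.of_apply, ite_mul, one_mul, zero_mul, mul_ite,
      mul_one, mul_zero]
    by_cases h : (i : ℕ) + (k + 1) = (j : ℕ)
    · have hik : (i : ℕ) + k < m := by omega
      rw [if_pos h, Finset.sum_eq_single (⟨(i : ℕ) + k, hik⟩ : Fin m)]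
      · simp only [Fin.val_mk]
        rw [if_pos (show (i : ℕ) + k + 1 = (j : ℕ) by omega)]
        simp
      · intro b _ hb
        split_ifs with h1 h2
        · exact absurd (Fin.ext (by simp; omega)) hb
        · rfl
        · rfl
      · intro hmem
        exact absurd (Finset.mem_univ _) hmem
    · rw [if_neg h, Finset.sum_eq_zero]
      intro l _
      split_ifs with h1 h2
      · omega
      · rfl
      · rfl

noncomputable def q (m : ℕ) (w : Fin m → ℂ) (M : Matrix (Fin m) (Fin m) ℝ) : ℝ :=
  (star w ⬝ᵥ ((M.map Complex.ofReal) *ᵥ w)).re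

lemma q_eq (m : ℕ) (w : Fin m → ℂ) (M : Matrix (Fin m) (Fin m) ℝ) :
    q m w M = ∑ i, ∑ j, M i j * ((starRingEnd ℂ) (w i) * w j).re := by
  simp only [q, dotProduct, mulVec, Pi.star_apply, Matrix.map_apply]
  rw [Complex.re_sum]
  refine Finset.sum_congr rfl fun i _ => ?_
  rw [Finset.mul_sum, Complex.re_sum]
  refine Finset.sum_congr rfl fun j _ => ?_
  have h : star (w i) * ((M i j : ℂ) * w j) = (M i j : ℂ) * ((starRingEnd ℂ) (w i) * w j) := by
    simp [Complex.star_def]; ring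
  rw [h, Complex.re_ofReal_mul]

lemma q_transpose (m : ℕ) (w : Fin m → ℂ) (M : Matrix (Fin m) (Fin m) ℝ) :
    q m w Mᵀ = q m w M := by
  rw [q_eq, q_eq, Finset.sum_comm]
  refine Finset.sum_congr rfl fun i _ => Finset.sum_congr rfl fun j _ => ?_
  rw [Matrix.transpose_apply]
  congr 1
  simp [Complex.mul_re]
  ring

lemma q_add (m : ℕ) (w : Fin m → ℂ) (A B : Matrix (Fin m) (Fin m) ℝ) :
    q m w (A + B) = q m w A + q m w B := by
  simp [q_eq, Matrix.add_apply, add_mul, Finset.sum_add_distrib]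

lemma q_smul (m : ℕ) (w : Fin m → ℂ) (c : ℝ) (M : Matrix (Fin m) (Fin m) ℝ) :
    q m w (c • M) = c * q m w M := by
  simp [q_eq, Matrix.smul_apply, smul_eq_mul, Finset.mul_sum, mul_assoc]

lemma q_zero (m : ℕ) (w : Fin m → ℂ) : q m w (0 : Matrix (Fin m) (Fin m) ℝ) = 0 := by
  simp [q_eq]

lemma q_sum (m : ℕ) (w : Fin m → ℂ) {α : Type*} (s : Finset α)
    (M : α → Matrix (Fin m) (Fin m) ℝ) :
    q m w (∑ k ∈ s, M k) = ∑ k ∈ s, q m w (M k) := by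
  classical
  induction s using Finset.induction_on with
  | empty => simp [q_zero]
  | insert _ _ h ih =>
    rw [Finset.sum_insert h, Finset.sum_insert h, q_add, ih]

lemma q_one (m : ℕ) (w : Fin m → ℂ) :
    q m w (1 : Matrix (Fin m) (Fin m) ℝ) = ∑ i, ‖w i‖ ^ 2 := by
  rw [q_eq]
  refine Finset.sum_congr rfl fun i _ => ?_
  rw [Finset.sum_eq_single i]
  · simp [Complex.conj_mul', ← Complex.ofReal_pow, Complex.sq_norm]
  · intro b _ hb
    simp [Matrix.one_apply, Ne.symm hb]
  · intro h; exact absurd (Finset.mem_univ _) h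

lemma sum_ite_unique {m : ℕ} (p : Fin m → Prop) [DecidablePred p]
    (hp : ∀ a b, p a → p b → a = b) {x : ℝ} (hx : 0 ≤ x) :
    ∑ j, (if p j then x else 0) ≤ x := by
  classical
  rw [Finset.sum_ite, Finset.sum_const, Finset.sum_const_zero, add_zero]
  have hc : (Finset.univ.filter p).card ≤ 1 := by
    apply Finset.card_le_one.mpr
    intro a ha b hb
    exact hp a b (Finset.mem_filter.mp ha).2 (Finset.mem_filter.mp hb).2
  calc (Finset.univ.filter p).card • x ≤ 1 • x := by
        apply nsmul_le_nsmul_left hx hc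
    _ = x := one_smul _ _

lemma abs_q_shift_le (m k : ℕ) (w : Fin m → ℂ) :
    |q m w ((shiftMatrix m) ^ k)| ≤ ∑ i, ‖w i‖ ^ 2 := by
  have hre : ∀ a b : ℂ, |((starRingEnd ℂ) a * b).re| ≤
      (‖a‖ ^ 2 + ‖b‖ ^ 2) / 2 := by
    intro a b
    calc |((starRingEnd ℂ) a * b).re| ≤ ‖(starRingEnd ℂ) a * b‖ :=
          Complex.abs_re_le_norm _
      _ = ‖a‖ * ‖b‖ := by simp [_root_.map_mul]
      _ ≤ _ := by nlinarith [sq_nonneg (‖a‖ - ‖b‖)]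
  rw [q_eq]
  simp only [shift_pow_apply, ite_mul, one_mul, zero_mul]
  calc |∑ i : Fin m, ∑ j : Fin m, (if (i : ℕ) + k = (j : ℕ) then ((starRingEnd ℂ) (w i) * w j).re else 0)|
      ≤ ∑ i : Fin m, ∑ j : Fin m, |if (i : ℕ) + k = (j : ℕ) then ((starRingEnd ℂ) (w i) * w j).re else 0| := by
        refine (Finset.abs_sum_le_sum_abs _ _).trans ?_
        exact Finset.sum_le_sum fun i _ => Finset.abs_sum_le_sum_abs _ _
    _ ≤ ∑ i : Fin m, ∑ j : Fin m, ((if (i : ℕ) + k = (j : ℕ) then ‖w i‖ ^ 2 / 2 else 0) +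
          (if (i : ℕ) + k = (j : ℕ) then ‖w j‖ ^ 2 / 2 else 0)) := by
        refine Finset.sum_le_sum fun i _ => Finset.sum_le_sum fun j _ => ?_
        by_cases h : (i : ℕ) + k = (j : ℕ)
        · simp only [h, if_pos]
          calc |((starRingEnd ℂ) (w i) * w j).re|
              ≤ (‖w i‖ ^ 2 + ‖w j‖ ^ 2) / 2 := hre _ _
            _ = ‖w i‖ ^ 2 / 2 + ‖w j‖ ^ 2 / 2 := by ring
        · simp [h]
    _ ≤ ∑ i, ‖w i‖ ^ 2 := by
        simp only [Finset.sum_add_distrib]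
        have hA : ∑ i : Fin m, ∑ j : Fin m, (if (i : ℕ) + k = (j : ℕ) then ‖w i‖ ^ 2 / 2 else 0)
            ≤ ∑ i, ‖w i‖ ^ 2 / 2 := by
          refine Finset.sum_le_sum fun i _ => ?_
          exact sum_ite_unique _ (fun a b ha hb => Fin.ext (by omega)) (by positivity)
        have hB : ∑ i : Fin m, ∑ j : Fin m, (if (i : ℕ) + k = (j : ℕ) then ‖w j‖ ^ 2 / 2 else 0)
            ≤ ∑ j, ‖w j‖ ^ 2 / 2 := by
          rw [Finset.sum_comm]
          refine Finset.sum_le_sum fun j _ => ?_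
          exact sum_ite_unique _ (fun a b ha hb => Fin.ext (by omega)) (by positivity)
        calc _ ≤ (∑ i, ‖w i‖ ^ 2 / 2) + ∑ j, ‖w j‖ ^ 2 / 2 :=
              add_le_add hA hB
          _ = ∑ i, ‖w i‖ ^ 2 := by
              rw [← Finset.sum_add_distrib]
              exact Finset.sum_congr rfl fun i _ => by ring

lemma geom_bound (n : ℕ) (ε' : ℝ) (hε'0 : 0 < ε') (hε' : ε' ≤ 1 / 2) :
    ∑ k ∈ Finset.Icc 1 n, ε' ^ k ≤ 2 * ε' := by
  have h : ∀ N : ℕ, ∑ k ∈ Finset.Icc 1 N, ε' ^ k ≤ 2 * ε' - 2 * ε' ^ (N + 1) := by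
    intro N
    induction N with
    | zero => norm_num
    | succ N ih =>
      rw [Finset.sum_Icc_succ_top (by omega : 1 ≤ N + 1)]
      have ha : (0 : ℝ) ≤ ε' ^ (N + 1) := pow_nonneg hε'0.le _
      have hb : (0 : ℝ) ≤ (1 - 2 * ε') * ε' ^ (N + 1) :=
        mul_nonneg (by linarith) ha
      rw [pow_succ (ε') (N + 1)]
      nlinarith
  have := h n
  have := pow_nonneg hε'0.le (n + 1)
  linarith

end JordanAux

/-- For `K = (1/T)((ln λ) I + ∑_{k=1}^{m-1} ((-1)^{k+1}/k)(ε')^k N^k)` with `λ > 0`,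
`T > 0`, `0 < ε' ≤ 1/2`, we have `(1/2) w^*(K^* + K) w ≤ ((ln λ)/T + 2ε'/T) ‖w‖²`
for all complex vectors `w`. -/
theorem hermitian_part_bound_jordan_block_pos (m : ℕ) (lam T ε' : ℝ)
    (hlam : 0 < lam) (hT : 0 < T) (hε'0 : 0 < ε') (hε' : ε' ≤ 1 / 2)
    (K : Matrix (Fin m) (Fin m) ℝ)
    (hK : K = (1 / T) • ((Real.log lam) • (1 : Matrix (Fin m) (Fin m) ℝ) +
      ∑ k ∈ Finset.Icc 1 (m - 1), ((-1 : ℝ) ^ (k + 1) / (k : ℝ) * ε' ^ k) • shiftMatrix m ^ k)) :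
    ∀ w : Fin m → ℂ,
      (1 / 2 : ℝ) * (star w ⬝ᵥ (((K.map Complex.ofReal)ᴴ + K.map Complex.ofReal) *ᵥ w)).re ≤
        (Real.log lam / T + 2 * ε' / T) * ∑ i, ‖w i‖ ^ 2 := by
  intro w
  set F := ∑ i, ‖w i‖ ^ 2 with hF
  have hF0 : 0 ≤ F := Finset.sum_nonneg fun i _ => sq_nonneg _
  have hconj : (K.map Complex.ofReal)ᴴ = Kᵀ.map Complex.ofReal := by
    ext i j
    simp [Matrix.conjTranspose_apply, Matrix.map_apply, Complex.star_def, Complex.conj_ofReal]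
  have hlhs : (star w ⬝ᵥ (((K.map Complex.ofReal)ᴴ + K.map Complex.ofReal) *ᵥ w)).re
      = 2 * JordanAux.q m w K := by
    rw [hconj, Matrix.add_mulVec, dotProduct_add, Complex.add_re]
    have h1 : (star w ⬝ᵥ (Kᵀ.map Complex.ofReal *ᵥ w)).re = JordanAux.q m w Kᵀ := rfl
    have h2 : (star w ⬝ᵥ (K.map Complex.ofReal *ᵥ w)).re = JordanAux.q m w K := rfl
    rw [h1, h2, JordanAux.q_transpose]
    ring
  rw [hlhs]
  have hqK : JordanAux.q m w K = (1 / T) * (Real.log lam * F +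
      ∑ k ∈ Finset.Icc 1 (m - 1),
        ((-1 : ℝ) ^ (k + 1) / (k : ℝ) * ε' ^ k) * JordanAux.q m w (shiftMatrix m ^ k)) := by
    rw [hK, JordanAux.q_smul, JordanAux.q_add, JordanAux.q_smul, JordanAux.q_one,
      JordanAux.q_sum, ← hF]
    congr 1
    congr 1
    exact Finset.sum_congr rfl fun k _ => JordanAux.q_smul m w _ _
  have hsum : ∑ k ∈ Finset.Icc 1 (m - 1),
      ((-1 : ℝ) ^ (k + 1) / (k : ℝ) * ε' ^ k) * JordanAux.q m w (shiftMatrix m ^ k)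
      ≤ 2 * ε' * F := by
    calc ∑ k ∈ Finset.Icc 1 (m - 1),
        ((-1 : ℝ) ^ (k + 1) / (k : ℝ) * ε' ^ k) * JordanAux.q m w (shiftMatrix m ^ k)
        ≤ ∑ k ∈ Finset.Icc 1 (m - 1), ε' ^ k * F := by
          refine Finset.sum_le_sum fun k hk => ?_
          have hk1 : 1 ≤ k := (Finset.mem_Icc.mp hk).1
          have h1 : |(-1 : ℝ) ^ (k + 1) / (k : ℝ) * ε' ^ k| ≤ ε' ^ k := by
            rw [abs_mul, abs_div, abs_pow, abs_neg, abs_one, one_pow,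
              abs_of_nonneg (pow_nonneg hε'0.le k)]
            have hkk : (1 : ℝ) ≤ |(k : ℝ)| := by
              rw [abs_of_nonneg (Nat.cast_nonneg k)]
              exact_mod_cast hk1
            calc 1 / |(k : ℝ)| * ε' ^ k ≤ 1 * ε' ^ k := by
                  apply mul_le_mul_of_nonneg_right _ (pow_nonneg hε'0.le k)
                  rw [div_le_one (by linarith)]
                  exact hkk
              _ = ε' ^ k := one_mul _
          have h2 := JordanAux.abs_q_shift_le m k w
          calc ((-1 : ℝ) ^ (k + 1) / (k : ℝ) * ε' ^ k) * JordanAux.q m w (shiftMatrix m ^ k)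
              ≤ |((-1 : ℝ) ^ (k + 1) / (k : ℝ) * ε' ^ k) * JordanAux.q m w (shiftMatrix m ^ k)| :=
                le_abs_self _
            _ = |(-1 : ℝ) ^ (k + 1) / (k : ℝ) * ε' ^ k| * |JordanAux.q m w (shiftMatrix m ^ k)| :=
                abs_mul _ _
            _ ≤ ε' ^ k * F :=
                mul_le_mul h1 h2 (abs_nonneg _) (pow_nonneg hε'0.le k)
      _ = (∑ k ∈ Finset.Icc 1 (m - 1), ε' ^ k) * F := (Finset.sum_mul _ _ _).symm
      _ ≤ 2 * ε' * F :=
          mul_le_mul_of_nonneg_right (JordanAux.geom_bound (m - 1) ε' hε'0 hε') hF0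
  calc (1 / 2 : ℝ) * (2 * JordanAux.q m w K) = JordanAux.q m w K := by ring
    _ = _ := hqK
    _ ≤ (1 / T) * (Real.log lam * F + 2 * ε' * F) := by
        apply mul_le_mul_of_nonneg_left (by linarith) (by positivity)
    _ = (Real.log lam / T + 2 * ε' / T) * F := by ring
end

section
/- Let P(t) be differentiable and invertible with (P^{-1})'(t) = -P(t)^{-1} F(t) + B P(t)^{-1}, and set M₀(t) = (P(t)^{-1})^* S^{-*} S^{-1} P(t)^{-1} for an invertible matrix S. Then M₀(t) F(t) + F(t)^T M₀(t) + M₀'(t) = (P(t)^{-1})^* (B^* S^{-*}S^{-1} + S^{-*}S^{-1} B) P(t)^{-1}. -/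
open Matrix

private lemma hasDerivAt_conj' {f : ℝ → ℂ} {f' : ℂ} {t : ℝ} (h : HasDerivAt f f' t) :
    HasDerivAt (fun s => (starRingEnd ℂ) (f s)) ((starRingEnd ℂ) f') t := by
  have := (Complex.conjCLE.toContinuousLinearMap.hasFDerivAt (x := f t)).comp_hasDerivAt t h
  simpa [Function.comp_def] using this

/-- Key algebraic identity: with `(P⁻¹)'(t) = -P(t)⁻¹ F(t) + B P(t)⁻¹` and
`M₀(t) = (P(t)⁻¹)^* (S⁻¹)^* S⁻¹ P(t)⁻¹`, one has
`M₀ F + Fᵀ M₀ + M₀' = (P⁻¹)^* (B^* (S⁻¹)^* S⁻¹ + (S⁻¹)^* S⁻¹ B) P⁻¹`. -/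
theorem contraction_identity_periodic (n : ℕ)
    (F : ℝ → Matrix (Fin n) (Fin n) ℝ)
    (B : Matrix (Fin n) (Fin n) ℂ)
    (S : Matrix (Fin n) (Fin n) ℂ) (hS : IsUnit S)
    (P : ℝ → Matrix (Fin n) (Fin n) ℂ)
    (hP : ∀ t : ℝ, IsUnit (P t))
    (hP' : ∀ (t : ℝ) (i j : Fin n),
      HasDerivAt (fun s => (P s)⁻¹ i j)
        ((-(P t)⁻¹ * (F t).map Complex.ofReal + B * (P t)⁻¹) i j) t)
    (M₀ M₀' : ℝ → Matrix (Fin n) (Fin n) ℂ)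
    (hM₀ : ∀ t : ℝ, M₀ t = ((P t)⁻¹)ᴴ * (S⁻¹)ᴴ * S⁻¹ * (P t)⁻¹)
    (hM₀' : ∀ (t : ℝ) (i j : Fin n),
      HasDerivAt (fun s => M₀ s i j) (M₀' t i j) t) :
    ∀ t : ℝ,
      M₀ t * (F t).map Complex.ofReal + ((F t)ᵀ).map Complex.ofReal * M₀ t + M₀' t =
        ((P t)⁻¹)ᴴ * (Bᴴ * (S⁻¹)ᴴ * S⁻¹ + (S⁻¹)ᴴ * S⁻¹ * B) * (P t)⁻¹ := by
  intro t
  set C : Matrix (Fin n) (Fin n) ℂ := (S⁻¹)ᴴ * S⁻¹ with hC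
  set Q : Matrix (Fin n) (Fin n) ℂ := (P t)⁻¹ with hQ
  set Fm : Matrix (Fin n) (Fin n) ℂ := (F t).map Complex.ofReal with hFm
  set Q' : Matrix (Fin n) (Fin n) ℂ := -Q * Fm + B * Q with hQ'
  have hFT : ((F t)ᵀ).map Complex.ofReal = Fmᴴ := by
    ext i j
    simp [hFm, conjTranspose_apply, Complex.conj_ofReal]
  -- derivative of each entry of M₀
  have hder : ∀ i j : Fin n,
      HasDerivAt (fun s => M₀ s i j) ((Q'ᴴ * C * Q + Qᴴ * C * Q') i j) t := by
    intro i j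
    have key : HasDerivAt
        (fun s => ∑ k, ∑ l,
          (starRingEnd ℂ) ((P s)⁻¹ l i) * C l k * (P s)⁻¹ k j)
        (∑ k, ∑ l,
          ((starRingEnd ℂ) (Q' l i) * C l k * Q k j
            + (starRingEnd ℂ) (Q l i) * C l k * Q' k j)) t := by
      apply HasDerivAt.fun_sum
      intro k _
      apply HasDerivAt.fun_sum
      intro l _
      have h1 := hasDerivAt_conj' (hP' t l i)
      have h2 := hP' t k j
      have := (h1.mul_const (C l k)).fun_mul h2
      simpa [hQ, hQ', hFm] using this
    have heq : (fun s => M₀ s i j) =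
        (fun s => ∑ k, ∑ l,
          (starRingEnd ℂ) ((P s)⁻¹ l i) * C l k * (P s)⁻¹ k j) := by
      funext s
      rw [hM₀ s]
      simp [Matrix.mul_apply, conjTranspose_apply, Finset.sum_mul, hC, mul_assoc,
        Matrix.mul_assoc]
      try rw [Finset.sum_comm]
    rw [heq]
    convert key using 1
    simp [Matrix.mul_apply, conjTranspose_apply, Finset.sum_mul, Finset.mul_sum,
      Finset.sum_add_distrib, mul_assoc]
    rw [Finset.sum_comm]
    congr 1
    rw [Finset.sum_comm]
  have hM : M₀' t = Q'ᴴ * C * Q + Qᴴ * C * Q' := by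
    ext i j
    exact (hM₀' t i j).unique (hder i j)
  have hM0 : M₀ t = Qᴴ * C * Q := by rw [hM₀ t]; simp [hC, hQ, Matrix.mul_assoc]
  rw [hM, hM0, hFT, hQ']
  have hconjQ' : (-Q * Fm + B * Q)ᴴ = -(Fmᴴ * Qᴴ) + Qᴴ * Bᴴ := by
    simp [conjTranspose_add, conjTranspose_mul]
  rw [hconjQ']
  rw [hC]
  noncomm_ring
end

section
/- Let K = (1/T)((ln r) I_{2m} + blockdiag(Θ,…,Θ) + ∑_{k=1}^{2m-2}((-1)^{k+1}/k)(ε')^k 𝒩^k), where Θ = [[0,-θ],[θ,0]], r > 0, and 𝒩 is the real nilpotent matrix with 2×2 blocks R(θ)^{-1} (R(θ) the rotation by θ scaled by 1) on its block superdiagonal. Then exp(KT) = 𝓡 (I + ε' 𝒩), where 𝓡 = blockdiag(r R(θ), …, r R(θ)) with R(θ) = [[cos θ, −sin θ],[sin θ, cos θ]]. -/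
open NormedSpace Matrix

/-- The rotation matrix `R(θ) = [[cos θ, -sin θ],[sin θ, cos θ]]`. -/
noncomputable def rotMat (θ : ℝ) : Matrix (Fin 2) (Fin 2) ℝ :=
  !![Real.cos θ, -Real.sin θ; Real.sin θ, Real.cos θ]

/-- The block-diagonal `2m × 2m` matrix with `m` copies of a `2 × 2` block `A`. -/
def blockDiag2 (m : ℕ) (A : Matrix (Fin 2) (Fin 2) ℝ) :
    Matrix (Fin m × Fin 2) (Fin m × Fin 2) ℝ :=
  Matrix.of fun p q => if p.1 = q.1 then A p.2 q.2 else 0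

/-- The `2m × 2m` matrix with `2 × 2` blocks `A` on the block superdiagonal. -/
def blockSuperDiag2 (m : ℕ) (A : Matrix (Fin 2) (Fin 2) ℝ) :
    Matrix (Fin m × Fin 2) (Fin m × Fin 2) ℝ :=
  Matrix.of fun p q => if (p.1 : ℕ) + 1 = (q.1 : ℕ) then A p.2 q.2 else 0

section ExpJordanAuxSection

open Finset Kronecker

namespace ExpJordanAux

variable {B : Type*} [NormedRing B] [NormedAlgebra ℝ B]

noncomputable def cfun (M : ℕ) (Y : B) (s : ℝ) : B :=
  ∑ j ∈ range (M + 1), ((-1 : ℝ) ^ j * s ^ j) • Y ^ j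

noncomputable def lfun (M : ℕ) (Y : B) (s : ℝ) : B :=
  ∑ i ∈ range M, ((-1 : ℝ) ^ i / (i + 1) * s ^ (i + 1)) • Y ^ (i + 1)

noncomputable def ufun (M : ℕ) (Y : B) (s : ℝ) : B :=
  ∑ i ∈ range M, ((-1 : ℝ) ^ i / (i + 1) * s ^ (i + 1)) • Y ^ i

noncomputable def efun (M : ℕ) (Y : B) (s : ℝ) : B :=
  ∑ j ∈ range (M + 1), ((j.factorial : ℝ))⁻¹ • lfun M Y s ^ j

lemma commute_sum {x : B} (Y : B) (hx : ∀ n, Commute x (Y ^ n)) (f : ℕ → ℝ) (t : Finset ℕ)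
    (g : ℕ → ℕ) : Commute x (∑ j ∈ t, f j • Y ^ g j) :=
  Commute.sum_right _ _ _ fun j _ => (hx (g j)).smul_right _

lemma commute_Y_cfun (M : ℕ) (Y : B) (s : ℝ) : Commute Y (cfun M Y s) :=
  commute_sum Y (fun n => (Commute.refl Y).pow_right n) _ _ _

lemma commute_Y_ufun (M : ℕ) (Y : B) (s : ℝ) : Commute Y (ufun M Y s) :=
  commute_sum Y (fun n => (Commute.refl Y).pow_right n) _ _ _

lemma commute_Y_lfun (M : ℕ) (Y : B) (s : ℝ) : Commute Y (lfun M Y s) :=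
  commute_sum Y (fun n => (Commute.refl Y).pow_right n) _ _ _

lemma commute_cfun_lfun (M : ℕ) (Y : B) (s t : ℝ) : Commute (cfun M Y s) (lfun M Y t) :=
  commute_sum Y (fun n => (commute_Y_cfun M Y s).symm.pow_right n) _ _ _

lemma commute_cfun_efun (M : ℕ) (Y : B) (s t : ℝ) : Commute (cfun M Y s) (efun M Y t) :=
  Commute.sum_right _ _ _ fun j _ =>
    (((commute_cfun_lfun M Y s t).pow_right j)).smul_right _

lemma commute_Y_efun (M : ℕ) (Y : B) (s : ℝ) : Commute Y (efun M Y s) :=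
  Commute.sum_right _ _ _ fun j _ => (((commute_Y_lfun M Y s).pow_right j)).smul_right _

lemma cfun_mul (M : ℕ) (Y : B) (hY : Y ^ (M + 1) = 0) (s : ℝ) :
    cfun M Y s * (1 + s • Y) = 1 := by
  have h : cfun M Y s * (1 + s • Y) = ∑ j ∈ range (M + 1),
      ((((-1 : ℝ) ^ j * s ^ j) • Y ^ j) - (((-1 : ℝ) ^ (j + 1) * s ^ (j + 1)) • Y ^ (j + 1))) := by
    rw [cfun, Finset.sum_mul]
    refine Finset.sum_congr rfl fun j _ => ?_
    rw [mul_add, mul_one, smul_mul_assoc, mul_smul_comm, ← pow_succ,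
      pow_succ (-1 : ℝ), pow_succ s]
    module
  rw [h, Finset.sum_range_sub']
  simp [hY]

lemma mul_cfun (M : ℕ) (Y : B) (hY : Y ^ (M + 1) = 0) (s : ℝ) :
    (1 + s • Y) * cfun M Y s = 1 := by
  have hc : Commute (cfun M Y s) (1 + s • Y) :=
    (Commute.one_right _).add_right ((commute_Y_cfun M Y s).symm.smul_right s)
  rw [← hc.eq, cfun_mul M Y hY s]

lemma hasDerivAt_cfun (M : ℕ) (Y : B) (s : ℝ) :
    HasDerivAt (cfun M Y)
      (∑ j ∈ range (M + 1), (((-1 : ℝ) ^ j) * (j * s ^ (j - 1))) • Y ^ j) s := by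
  have : ∀ j ∈ range (M + 1), HasDerivAt (fun t : ℝ => ((-1 : ℝ) ^ j * t ^ j) • Y ^ j)
      ((((-1 : ℝ) ^ j) * (j * s ^ (j - 1))) • Y ^ j) s := fun j _ =>
    ((hasDerivAt_pow j s).const_mul ((-1 : ℝ) ^ j)).smul_const _
  exact HasDerivAt.fun_sum this

lemma hasDerivAt_lfun (M : ℕ) (Y : B) (hY : Y ^ (M + 1) = 0) (s : ℝ) :
    HasDerivAt (lfun M Y) (Y * cfun M Y s) s := by
  have h : ∀ i ∈ range M, HasDerivAt (fun t : ℝ => ((-1 : ℝ) ^ i / (i + 1) * t ^ (i + 1)) • Y ^ (i + 1))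
      (((-1 : ℝ) ^ i / (i + 1) * ((i + 1) * s ^ i)) • Y ^ (i + 1)) s := fun i _ => by
    have := ((hasDerivAt_pow (i + 1) s).const_mul ((-1 : ℝ) ^ i / (i + 1))).smul_const (Y ^ (i + 1))
    simpa using this
  have hsum := HasDerivAt.fun_sum h
  have heq : (∑ i ∈ range M, ((-1 : ℝ) ^ i / (i + 1) * ((i + 1) * s ^ i)) • Y ^ (i + 1))
      = Y * cfun M Y s := by
    rw [cfun, Finset.mul_sum]
    rw [Finset.sum_range_succ]
    have hlast : ((-1 : ℝ) ^ M * s ^ M) • (Y * Y ^ M) = 0 := by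
      rw [← pow_succ']; simp [hY]
    rw [mul_smul_comm, hlast, add_zero]
    refine Finset.sum_congr rfl fun i _ => ?_
    rw [mul_smul_comm, ← pow_succ']
    congr 1
    have hi : ((i : ℝ) + 1) ≠ 0 := by positivity
    field_simp
  exact heq ▸ hsum

lemma lfun_eq (M : ℕ) (Y : B) (s : ℝ) : lfun M Y s = Y * ufun M Y s := by
  rw [ufun, Finset.mul_sum, lfun]
  exact Finset.sum_congr rfl fun i _ => by rw [mul_smul_comm, ← pow_succ']

lemma lfun_pow_high (M : ℕ) (Y : B) (hY : Y ^ (M + 1) = 0) (s : ℝ) {n : ℕ} (hn : M + 1 ≤ n) :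
    lfun M Y s ^ n = 0 := by
  have hYn : Y ^ n = 0 := by
    rw [← Nat.sub_add_cancel hn, pow_add, hY, mul_zero]
  rw [lfun_eq, (commute_Y_ufun M Y s).mul_pow, hYn, zero_mul]

lemma Yc_mul_lfun_pow (M : ℕ) (Y : B) (hY : Y ^ (M + 1) = 0) (s : ℝ) :
    (Y * cfun M Y s) * lfun M Y s ^ M = 0 := by
  rw [lfun_eq, (commute_Y_ufun M Y s).mul_pow]
  calc (Y * cfun M Y s) * (Y ^ M * ufun M Y s ^ M)
      = Y * ((cfun M Y s * Y ^ M) * ufun M Y s ^ M) := by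
        rw [mul_assoc, mul_assoc]
    _ = Y * ((Y ^ M * cfun M Y s) * ufun M Y s ^ M) := by
        rw [((commute_Y_cfun M Y s).pow_left M).eq]
    _ = Y ^ (M + 1) * (cfun M Y s * ufun M Y s ^ M) := by
        rw [pow_succ']
        simp [mul_assoc]
    _ = 0 := by rw [hY, zero_mul]

end ExpJordanAux

namespace ExpJordanAux
variable {B : Type*} [NormedRing B] [NormedAlgebra ℝ B]

lemma hasDerivAt_pow_comm {f : ℝ → B} {f' : B} {s : ℝ}
    (hf : HasDerivAt f f' s) (hc : Commute (f s) f') (n : ℕ) :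
    HasDerivAt (fun t => f t ^ (n + 1)) ((n + 1 : ℕ) • (f' * f s ^ n)) s := by
  induction n with
  | zero => simpa using hf
  | succ n ih =>
    have h := ih.fun_mul hf
    have hfun : (fun t => f t ^ (n + 1) * f t) = fun t => f t ^ (n + 2) := by
      funext t; rw [← pow_succ]
    rw [hfun] at h
    convert h using 1
    rw [smul_mul_assoc, mul_assoc, ← pow_succ, (hc.pow_left (n + 1)).eq, succ_nsmul]

lemma hasDerivAt_efun (M : ℕ) (Y : B) (hY : Y ^ (M + 1) = 0) (s : ℝ) :
    HasDerivAt (efun M Y) ((Y * cfun M Y s) * efun M Y s) s := by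
  have hlc : Commute (lfun M Y s) (Y * cfun M Y s) :=
    ((commute_Y_lfun M Y s).symm).mul_right ((commute_cfun_lfun M Y s s).symm)
  have hterm : ∀ i ∈ range M, HasDerivAt
      (fun t => (((i + 1).factorial : ℝ))⁻¹ • lfun M Y t ^ (i + 1))
      ((((i + 1).factorial : ℝ))⁻¹ • ((i + 1 : ℕ) • ((Y * cfun M Y s) * lfun M Y s ^ i))) s :=
    fun i _ => HasDerivAt.fun_const_smul _
      (hasDerivAt_pow_comm (hasDerivAt_lfun M Y hY s) hlc i)
  have hsum := (HasDerivAt.fun_sum hterm).add_const (1 : B)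
  have hfun : (fun t => (∑ i ∈ range M, (((i + 1).factorial : ℝ))⁻¹ • lfun M Y t ^ (i + 1))
      + (1 : B)) = efun M Y := by
    funext t
    rw [efun, Finset.sum_range_succ']
    simp
  rw [hfun] at hsum
  convert hsum using 1
  · rfl
  have hcoeff : ∀ i : ℕ, (((i + 1).factorial : ℝ))⁻¹ • ((i + 1 : ℕ) • ((Y * cfun M Y s) * lfun M Y s ^ i))
      = ((i.factorial : ℝ))⁻¹ • ((Y * cfun M Y s) * lfun M Y s ^ i) := by
    intro i
    rw [← Nat.cast_smul_eq_nsmul ℝ, smul_smul]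
    congr 1
    rw [Nat.factorial_succ]
    push_cast
    have h1 : ((i : ℝ) + 1) ≠ 0 := by positivity
    have h2 : ((i.factorial : ℝ)) ≠ 0 := Nat.cast_ne_zero.2 i.factorial_ne_zero
    field_simp
  calc (Y * cfun M Y s) * efun M Y s
      = ∑ j ∈ range (M + 1), ((j.factorial : ℝ))⁻¹ • ((Y * cfun M Y s) * lfun M Y s ^ j) := by
        rw [efun, Finset.mul_sum]
        exact Finset.sum_congr rfl fun j _ => (mul_smul_comm _ _ _)
    _ = ∑ i ∈ range M, ((i.factorial : ℝ))⁻¹ • ((Y * cfun M Y s) * lfun M Y s ^ i) := by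
        rw [Finset.sum_range_succ, Yc_mul_lfun_pow M Y hY s, smul_zero, add_zero]
    _ = ∑ i ∈ range M, (((i + 1).factorial : ℝ))⁻¹ • ((i + 1 : ℕ) • ((Y * cfun M Y s) * lfun M Y s ^ i)) := by
        exact Finset.sum_congr rfl fun i _ => (hcoeff i).symm

lemma efun_mul_cfun (M : ℕ) (Y : B) (hY : Y ^ (M + 1) = 0) (s : ℝ) :
    efun M Y s * cfun M Y s = 1 := by
  have hD : ∀ t : ℝ, HasDerivAt (fun x => efun M Y x * cfun M Y x) 0 t := by
    intro t
    have hc := hasDerivAt_cfun M Y t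
    set D : B := ∑ j ∈ range (M + 1), (((-1 : ℝ) ^ j) * (j * t ^ (j - 1))) • Y ^ j with hDdef
    have hDeq : D = -(cfun M Y t * Y * cfun M Y t) := by
      have hB : HasDerivAt (fun x : ℝ => 1 + x • Y) Y t := by
        simpa using ((hasDerivAt_id t).smul_const Y).const_add (1 : B)
      have h1 : HasDerivAt (fun x => cfun M Y x * (1 + x • Y))
          (D * (1 + t • Y) + cfun M Y t * Y) t := hc.mul hB
      have h2 : HasDerivAt (fun x => cfun M Y x * (1 + x • Y)) 0 t := by
        have : (fun x : ℝ => cfun M Y x * (1 + x • Y)) = fun _ => 1 :=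
          funext fun x => cfun_mul M Y hY x
        rw [this]; exact hasDerivAt_const t 1
      have h3 := h1.unique h2
      have h4 : D * (1 + t • Y) = -(cfun M Y t * Y) := by
        have := eq_neg_of_add_eq_zero_left h3
        rw [this]
      calc D = D * ((1 + t • Y) * cfun M Y t) := by rw [mul_cfun M Y hY t, mul_one]
        _ = (D * (1 + t • Y)) * cfun M Y t := by rw [mul_assoc]
        _ = -(cfun M Y t * Y) * cfun M Y t := by rw [h4]
        _ = -(cfun M Y t * Y * cfun M Y t) := by rw [neg_mul]
    have he := hasDerivAt_efun M Y hY t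
    have hprod := he.mul hc
    have hval : ((Y * cfun M Y t) * efun M Y t) * cfun M Y t + efun M Y t * D = 0 := by
      rw [hDeq]
      have hYc : Commute Y (cfun M Y t) := commute_Y_cfun M Y t
      have hcomm : Commute (Y * cfun M Y t) (efun M Y t) :=
        ((commute_Y_efun M Y t)).mul_left (commute_cfun_efun M Y t t)
      calc ((Y * cfun M Y t) * efun M Y t) * cfun M Y t + efun M Y t * -(cfun M Y t * Y * cfun M Y t)
          = (efun M Y t * (Y * cfun M Y t)) * cfun M Y t
            - efun M Y t * (cfun M Y t * Y * cfun M Y t) := by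
            rw [hcomm.eq, mul_neg, ← sub_eq_add_neg]
        _ = efun M Y t * ((Y * cfun M Y t) * cfun M Y t)
            - efun M Y t * ((Y * cfun M Y t) * cfun M Y t) := by
            rw [mul_assoc, hYc.eq]
        _ = 0 := sub_self _
    rw [← hval]
    exact hprod
  have hdiff : Differentiable ℝ (fun x => efun M Y x * cfun M Y x) :=
    fun x => (hD x).differentiableAt
  have hderiv : ∀ x, deriv (fun x => efun M Y x * cfun M Y x) x = 0 :=
    fun x => (hD x).deriv
  have hconst := is_const_of_deriv_eq_zero hdiff hderiv s 0
  have h0 : efun M Y 0 * cfun M Y 0 = 1 := by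
    have hl0 : lfun M Y 0 = 0 := by
      rw [lfun]
      refine Finset.sum_eq_zero fun i _ => ?_
      rw [zero_pow (Nat.succ_ne_zero i)]
      simp
    have he0 : efun M Y 0 = 1 := by
      rw [efun, hl0, Finset.sum_range_succ']
      simp
    have hc0 : cfun M Y 0 = 1 := by
      rw [cfun, Finset.sum_range_succ']
      simp
    rw [he0, hc0, one_mul]
  rw [hconst, h0]

theorem exp_trunc_log (M : ℕ) (Y : B) (hY : Y ^ (M + 1) = 0) :
    exp (∑ k ∈ Finset.Icc 1 M, ((-1 : ℝ) ^ (k + 1) / k) • Y ^ k) = 1 + Y := by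
  have hsum : (∑ k ∈ Finset.Icc 1 M, ((-1 : ℝ) ^ (k + 1) / k) • Y ^ k) = lfun M Y 1 := by
    rw [← Finset.Ico_add_one_right_eq_Icc, Finset.sum_Ico_eq_sum_range]
    rw [show M + 1 - 1 = M from rfl, lfun]
    refine Finset.sum_congr rfl fun i _ => ?_
    rw [add_comm 1 i]
    congr 1
    push_cast
    rw [one_pow, mul_one, pow_succ, pow_succ]
    ring
  have hexp : exp (lfun M Y 1) = efun M Y 1 := by
    rw [exp_eq_tsum (𝕂 := ℝ), efun]
    refine tsum_eq_sum fun n hn => ?_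
    have hn' : M + 1 <= n := by simpa [Finset.mem_range, not_lt] using hn
    rw [lfun_pow_high M Y hY 1 hn', smul_zero]
  rw [hsum, hexp]
  have h1 := efun_mul_cfun M Y hY 1
  have h2 := cfun_mul M Y hY 1
  calc efun M Y 1 = efun M Y 1 * (cfun M Y 1 * (1 + (1:ℝ) • Y)) := by rw [h2, mul_one]
    _ = (efun M Y 1 * cfun M Y 1) * (1 + (1:ℝ) • Y) := by rw [mul_assoc]
    _ = 1 + Y := by rw [h1, one_mul, one_smul]

end ExpJordanAux


namespace ExpJordanAux

def shiftMat (m : ℕ) : Matrix (Fin m) (Fin m) ℝ :=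
  Matrix.of fun i j => if (i : ℕ) + 1 = (j : ℕ) then 1 else 0

lemma blockDiag2_eq_kron (m : ℕ) (A : Matrix (Fin 2) (Fin 2) ℝ) :
    blockDiag2 m A = (1 : Matrix (Fin m) (Fin m) ℝ) ⊗ₖ A := by
  ext p q
  simp only [blockDiag2, Matrix.of_apply, Matrix.kroneckerMap_apply, Matrix.one_apply]
  split <;> simp

lemma blockSuperDiag2_eq_kron (m : ℕ) (A : Matrix (Fin 2) (Fin 2) ℝ) :
    blockSuperDiag2 m A = shiftMat m ⊗ₖ A := by
  ext p q
  simp only [blockSuperDiag2, shiftMat, Matrix.of_apply, Matrix.kroneckerMap_apply]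
  split <;> simp

lemma kron_pow (m : ℕ) (A : Matrix (Fin m) (Fin m) ℝ) (B : Matrix (Fin 2) (Fin 2) ℝ) (k : ℕ) :
    (A ⊗ₖ B) ^ k = (A ^ k) ⊗ₖ (B ^ k) := by
  induction k with
  | zero => simp only [pow_zero, Matrix.one_kronecker_one]
  | succ k ih => rw [pow_succ, pow_succ, pow_succ, ih, ← Matrix.mul_kronecker_mul]

lemma shiftMat_pow (m k : ℕ) :
    shiftMat m ^ k = Matrix.of fun (i j : Fin m) => if (i : ℕ) + k = (j : ℕ) then 1 else 0 := by
  induction k with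
  | zero =>
    ext i j
    simp [Matrix.one_apply, Fin.ext_iff]
  | succ k ih =>
    rw [pow_succ, ih]
    ext i j
    rw [Matrix.mul_apply]
    by_cases h : (i : ℕ) + (k + 1) = (j : ℕ)
    · have hik : (i : ℕ) + k < m := by omega
      rw [Finset.sum_eq_single (⟨(i : ℕ) + k, hik⟩ : Fin m)]
      · simp only [Matrix.of_apply, shiftMat, if_true, one_mul]
        rfl
      · intro b _ hb
        have hbne : ¬ ((i : ℕ) + k = (b : ℕ)) := by
          intro hc
          exact hb (Fin.ext hc.symm)
        simp [hbne]
      · intro hmem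
        exact absurd (Finset.mem_univ _) hmem
    · rw [Finset.sum_eq_zero, Matrix.of_apply, if_neg h]
      intro b _
      by_cases h1 : (i : ℕ) + k = (b : ℕ)
      · have h2 : ¬((b : ℕ) + 1 = (j : ℕ)) := by omega
        simp [shiftMat, h2]
      · simp [h1]

lemma shiftMat_pow_self (m : ℕ) : shiftMat m ^ m = 0 := by
  rw [shiftMat_pow]
  ext i j
  have : ¬((i : ℕ) + m = (j : ℕ)) := by omega
  simp [this]

noncomputable def bdHom (m : ℕ) :
    Matrix (Fin 2) (Fin 2) ℝ →+* Matrix (Fin m × Fin 2) (Fin m × Fin 2) ℝ where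
  toFun A := blockDiag2 m A
  map_one' := by
    show blockDiag2 m 1 = 1
    rw [blockDiag2_eq_kron, Matrix.one_kronecker_one]
  map_mul' A B := by
    show blockDiag2 m (A * B) = blockDiag2 m A * blockDiag2 m B
    rw [blockDiag2_eq_kron, blockDiag2_eq_kron, blockDiag2_eq_kron,
      ← Matrix.mul_kronecker_mul, one_mul]
  map_zero' := by
    show blockDiag2 m 0 = 0
    ext p q
    simp [blockDiag2]
  map_add' A B := by
    show blockDiag2 m (A + B) = blockDiag2 m A + blockDiag2 m B
    ext p q
    simp only [blockDiag2, Matrix.of_apply, Matrix.add_apply]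
    split <;> simp

lemma rotMat_mul_rot_neg (θ : ℝ) : rotMat θ * rotMat (-θ) = 1 := by
  ext i j
  fin_cases i <;> fin_cases j <;>
    simp [rotMat, Matrix.mul_apply, Fin.sum_univ_two, Matrix.one_apply] <;>
    nlinarith [Real.sin_sq_add_cos_sq θ]

lemma rotMat_inv (θ : ℝ) : (rotMat θ)⁻¹ = rotMat (-θ) :=
  Matrix.inv_eq_right_inv (rotMat_mul_rot_neg θ)

lemma commute_G_rot (a θ ψ : ℝ) :
    Commute (a • (1 : Matrix (Fin 2) (Fin 2) ℝ) + !![0, -θ; θ, 0]) (rotMat ψ) := by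
  refine Commute.add_left (((Commute.one_left _).smul_left a)) ?_
  show _ * _ = _ * _
  ext i j
  fin_cases i <;> fin_cases j <;>
    simp [rotMat, Matrix.mul_apply, Fin.sum_univ_two] <;> ring

end ExpJordanAux

namespace ExpJordanAux

section NormedMatrix

attribute [local instance] Matrix.linftyOpNormedRing Matrix.linftyOpNormedAlgebra

lemma continuous_bdHom (m : ℕ) : Continuous (bdHom m) := by
  refine continuous_matrix fun p q => ?_
  show Continuous fun A : Matrix (Fin 2) (Fin 2) ℝ => blockDiag2 m A p q
  simp only [blockDiag2, Matrix.of_apply]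
  split
  · exact (continuous_apply q.2).comp (continuous_apply p.2)
  · exact continuous_const

lemma exp_bd (m : ℕ) (G : Matrix (Fin 2) (Fin 2) ℝ) :
    NormedSpace.exp (blockDiag2 m G) = blockDiag2 m (NormedSpace.exp G) :=
  (map_exp (bdHom m) (continuous_bdHom m) G).symm

noncomputable def c2m : ℂ →+* Matrix (Fin 2) (Fin 2) ℝ where
  toFun z := !![z.re, -z.im; z.im, z.re]
  map_one' := by
    ext i j
    fin_cases i <;> fin_cases j <;> simp [Matrix.one_apply]
  map_mul' z w := by
    ext i j
    fin_cases i <;> fin_cases j <;>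
      simp [Matrix.mul_apply, Fin.sum_univ_two, Complex.mul_re, Complex.mul_im] <;> ring
  map_zero' := by
    ext i j
    fin_cases i <;> fin_cases j <;> simp
  map_add' z w := by
    ext i j
    fin_cases i <;> fin_cases j <;> simp [Complex.add_re, Complex.add_im] <;> ring

lemma continuous_c2m : Continuous c2m := by
  have h : (c2m : ℂ → Matrix (Fin 2) (Fin 2) ℝ) = fun z =>
      z.re • (1 : Matrix (Fin 2) (Fin 2) ℝ) + z.im • !![0, -1; 1, 0] := by
    funext z
    ext i j
    fin_cases i <;> fin_cases j <;>
      simp [c2m, Matrix.one_apply] <;> ring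
  rw [h]
  exact (Complex.continuous_re.smul continuous_const).add
    (Complex.continuous_im.smul continuous_const)

lemma exp_two (r θ : ℝ) (hr : 0 < r) :
    NormedSpace.exp ((Real.log r) • (1 : Matrix (Fin 2) (Fin 2) ℝ) + !![0, -θ; θ, 0])
      = r • rotMat θ := by
  have hz : c2m (Complex.mk (Real.log r) θ)
      = (Real.log r) • (1 : Matrix (Fin 2) (Fin 2) ℝ) + !![0, -θ; θ, 0] := by
    ext i j
    fin_cases i <;> fin_cases j <;> simp [c2m, Matrix.one_apply]
  rw [← hz]
  refine (map_exp c2m continuous_c2m _).symm.trans ?_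
  have hcexp : NormedSpace.exp (Complex.mk (Real.log r) θ)
      = Complex.exp (Complex.mk (Real.log r) θ) := by
    rw [← Complex.exp_eq_exp_ℂ]
  rw [hcexp]
  ext i j
  fin_cases i <;> fin_cases j <;>
    simp [c2m, rotMat, Complex.exp_re, Complex.exp_im, Real.exp_log hr]

lemma exp_nilpotent_sum (m M : ℕ) (Y : Matrix (Fin m × Fin 2) (Fin m × Fin 2) ℝ)
    (h : Y ^ (M + 1) = 0) :
    NormedSpace.exp (∑ k ∈ Finset.Icc 1 M, ((-1 : ℝ) ^ (k + 1) / (k : ℝ)) • Y ^ k) = 1 + Y :=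
  exp_trunc_log M Y h

end NormedMatrix

end ExpJordanAux


end ExpJordanAuxSection

/-- Real logarithm of the modified real Jordan block for a complex conjugate pair
`r e^{±iθ}`: with `Θ = [[0,-θ],[θ,0]]` and `𝒩` the nilpotent matrix with blocks `R(θ)⁻¹`
on the block superdiagonal,
`K = (1/T)((ln r) I + blockdiag(Θ,…,Θ) + ∑_{k=1}^{2m-2}((-1)^{k+1}/k)(ε')^k 𝒩^k)`
satisfies `exp (K T) = 𝓡 (I + ε' 𝒩)` with `𝓡 = blockdiag(r R(θ),…,r R(θ))`. -/
theorem exp_modified_jordan_block_complex_pair (m : ℕ) (hm : 1 ≤ m)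
    (r T θ ε' : ℝ) (hr : 0 < r) (hT : 0 < T) (hθ : θ ∈ Set.Ioo 0 (2 * Real.pi))
    (hε' : 0 < ε')
    (𝒩 K : Matrix (Fin m × Fin 2) (Fin m × Fin 2) ℝ)
    (h𝒩 : 𝒩 = blockSuperDiag2 m (rotMat θ)⁻¹)
    (hK : K = (1 / T) • ((Real.log r) • (1 : Matrix (Fin m × Fin 2) (Fin m × Fin 2) ℝ) +
      blockDiag2 m !![0, -θ; θ, 0] +
      ∑ k ∈ Finset.Icc 1 (2 * m - 2), ((-1 : ℝ) ^ (k + 1) / (k : ℝ) * ε' ^ k) • 𝒩 ^ k)) :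
    exp (T • K) =
      blockDiag2 m (r • rotMat θ) *
        ((1 : Matrix (Fin m × Fin 2) (Fin m × Fin 2) ℝ) + ε' • 𝒩) := by
  have hTK : T • K = ((Real.log r) • (1 : Matrix (Fin m × Fin 2) (Fin m × Fin 2) ℝ) +
      blockDiag2 m !![0, -θ; θ, 0]) +
      ∑ k ∈ Finset.Icc 1 (2 * m - 2), ((-1 : ℝ) ^ (k + 1) / (k : ℝ) * ε' ^ k) • 𝒩 ^ k := by
    rw [hK, smul_smul, mul_one_div_cancel hT.ne', one_smul, add_assoc]
  have hbd : (Real.log r) • (1 : Matrix (Fin m × Fin 2) (Fin m × Fin 2) ℝ) +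
      blockDiag2 m !![0, -θ; θ, 0]
      = blockDiag2 m ((Real.log r) • (1 : Matrix (Fin 2) (Fin 2) ℝ) + !![0, -θ; θ, 0]) := by
    ext p q
    by_cases h : p.1 = q.1
    · by_cases h2 : p = q
      · subst h2
        simp [blockDiag2, Matrix.one_apply]
      · have h3 : p.2 ≠ q.2 := fun hc => h2 (Prod.ext h hc)
        simp [blockDiag2, Matrix.one_apply, h, h2, h3]
    · have h2 : p ≠ q := fun hc => h (by rw [hc])
      simp [blockDiag2, Matrix.one_apply, h, h2]
  have h𝒩m : 𝒩 ^ m = 0 := by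
    rw [h𝒩, ExpJordanAux.blockSuperDiag2_eq_kron, ExpJordanAux.kron_pow,
      ExpJordanAux.shiftMat_pow_self]
    exact Matrix.zero_kronecker _
  have hnil : (ε' • 𝒩) ^ (2 * m - 2 + 1) = 0 := by
    have h1 : 2 * m - 2 + 1 = m + (m - 1) := by omega
    rw [smul_pow, h1, pow_add 𝒩, h𝒩m, zero_mul, smul_zero]
  have hS : (∑ k ∈ Finset.Icc 1 (2 * m - 2), ((-1 : ℝ) ^ (k + 1) / (k : ℝ) * ε' ^ k) • 𝒩 ^ k)
      = ∑ k ∈ Finset.Icc 1 (2 * m - 2), ((-1 : ℝ) ^ (k + 1) / (k : ℝ)) • (ε' • 𝒩) ^ k := by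
    refine Finset.sum_congr rfl fun k _ => ?_
    rw [smul_pow, smul_smul]
  have hGN : Commute
      (blockDiag2 m ((Real.log r) • (1 : Matrix (Fin 2) (Fin 2) ℝ) + !![0, -θ; θ, 0])) 𝒩 := by
    rw [h𝒩, ExpJordanAux.rotMat_inv, ExpJordanAux.blockDiag2_eq_kron,
      ExpJordanAux.blockSuperDiag2_eq_kron]
    show _ * _ = _ * _
    rw [← Matrix.mul_kronecker_mul, ← Matrix.mul_kronecker_mul, one_mul, mul_one,
      (ExpJordanAux.commute_G_rot (Real.log r) θ (-θ)).eq]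
  have hcomm : Commute
      (blockDiag2 m ((Real.log r) • (1 : Matrix (Fin 2) (Fin 2) ℝ) + !![0, -θ; θ, 0]))
      (∑ k ∈ Finset.Icc 1 (2 * m - 2), ((-1 : ℝ) ^ (k + 1) / (k : ℝ) * ε' ^ k) • 𝒩 ^ k) :=
    Commute.sum_right _ _ _ fun k _ => (hGN.pow_right k).smul_right _
  rw [hTK, hbd, Matrix.exp_add_of_commute _ _ hcomm, ExpJordanAux.exp_bd,
    ExpJordanAux.exp_two r θ hr, hS, ExpJordanAux.exp_nilpotent_sum m (2 * m - 2) (ε' • 𝒩) hnil]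
end
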